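/- Strict convexity of the coordinatewise SCAD_L2 penalty on ℝ^p: If a > 2, λ1 > 0 and λ2 > 1/(2(a−1)), then for every p ≥ 1 the function β ↦ Σ_{j=1}^p ( λ1·f_SCAD(|β_j|) + λ2·β_j² ) is strictly convex on ℝ^p. -/

import Mathlib

open intervalIntegral MeasureTheory

/-- The SCAD function `f_SCAD(θ) = ∫₀^θ ( 1_{t ≤ λ1} + ((a·λ1 − t)₊/((a−1)·λ1))·1_{t > λ1} ) dt`. -/
noncomputable def fSCAD (a lam1 : ℝ) (θ : ℝ) : ℝ :=
  ∫ t in (0:ℝ)..θ,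
    (if t ≤ lam1 then (1:ℝ) else 0) + (max (a * lam1 - t) 0 / ((a - 1) * lam1)) * (if lam1 < t then (1:ℝ) else 0)

/-- The integrand of the SCAD function. -/
noncomputable def scadPhi (a lam1 : ℝ) (t : ℝ) : ℝ :=
  (if t ≤ lam1 then (1:ℝ) else 0) + (max (a * lam1 - t) 0 / ((a - 1) * lam1)) * (if lam1 < t then (1:ℝ) else 0)

lemma fSCAD_eq (a lam1 θ : ℝ) : fSCAD a lam1 θ = ∫ t in (0:ℝ)..θ, scadPhi a lam1 t := rfl

/-- Odd extension of the SCAD integrand. -/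
noncomputable def scadRho (a lam1 : ℝ) (t : ℝ) : ℝ := Real.sign t * scadPhi a lam1 |t|

/-- Derivative-like function for the 1-D SCAD+L2 penalty. -/
noncomputable def scadGam (a lam1 lam2 : ℝ) (t : ℝ) : ℝ :=
  lam1 * scadRho a lam1 t + 2 * lam2 * t

section aux

variable {a lam1 lam2 : ℝ}

lemma scadPhi_nonneg (ha : 2 < a) (hlam1 : 0 < lam1) (t : ℝ) : 0 ≤ scadPhi a lam1 t := by
  unfold scadPhi
  have hD : 0 < (a - 1) * lam1 := mul_pos (by linarith) hlam1
  positivity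

lemma scadPhi_le_one (ha : 2 < a) (hlam1 : 0 < lam1) (t : ℝ) : scadPhi a lam1 t ≤ 1 := by
  unfold scadPhi
  have hD : 0 < (a - 1) * lam1 := mul_pos (by linarith) hlam1
  by_cases h : t ≤ lam1
  · simp [h, not_lt.mpr h]
  · push_neg at h
    simp only [not_le.mpr h, h, if_true, if_false, mul_one, zero_add]
    rw [div_le_one hD]
    exact max_le (by nlinarith) (le_of_lt hD)

lemma scadPhi_lip (ha : 2 < a) (hlam1 : 0 < lam1) (u v : ℝ) (hu : 0 ≤ u) (huv : u ≤ v) :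
    scadPhi a lam1 u - scadPhi a lam1 v ≤ (v - u) / ((a - 1) * lam1) := by
  have hD : 0 < (a - 1) * lam1 := mul_pos (by linarith) hlam1
  by_cases hv : v ≤ lam1
  · have hu' : u ≤ lam1 := le_trans huv hv
    unfold scadPhi
    simp only [hu', hv, if_true, not_lt.mpr hu', not_lt.mpr hv, if_false, mul_zero, add_zero]
    rw [sub_self]
    exact div_nonneg (by linarith) hD.le
  · push_neg at hv
    by_cases hu2 : u ≤ lam1
    · have h1 : scadPhi a lam1 u = 1 := by
        unfold scadPhi; simp [hu2, not_lt.mpr hu2]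
      have h2 : (a * lam1 - v) / ((a - 1) * lam1) ≤ scadPhi a lam1 v := by
        unfold scadPhi
        simp only [not_le.mpr hv, hv, if_true, if_false, mul_one, zero_add]
        gcongr
        exact le_max_left _ _
      have h4 : (1:ℝ) - (a * lam1 - v) / ((a - 1) * lam1) = (v - lam1) / ((a - 1) * lam1) := by
        rw [eq_div_iff hD.ne', sub_mul, div_mul_cancel₀ _ hD.ne']
        ring
      have h3 : (v - lam1) / ((a - 1) * lam1) ≤ (v - u) / ((a - 1) * lam1) := by
        gcongr
      linarith
    · push_neg at hu2
      have hv2 : lam1 < v := lt_of_lt_of_le hu2 huv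
      have h1 : scadPhi a lam1 u = max (a * lam1 - u) 0 / ((a - 1) * lam1) := by
        unfold scadPhi; simp [not_le.mpr hu2, hu2]
      have h2 : scadPhi a lam1 v = max (a * lam1 - v) 0 / ((a - 1) * lam1) := by
        unfold scadPhi; simp [not_le.mpr hv2, hv2]
      rw [h1, h2, div_sub_div_same]
      have key : max (a * lam1 - u) 0 - max (a * lam1 - v) 0 ≤ v - u := by
        rcases le_total (a * lam1 - u) 0 with h | h
        · have h2' : a * lam1 - v ≤ 0 := by linarith
          rw [max_eq_right h, max_eq_right h2']
          linarith
        · rw [max_eq_left h]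
          have := le_max_left (a * lam1 - v) 0
          linarith
      gcongr

lemma scadRho_nonpos (ha : 2 < a) (hlam1 : 0 < lam1) {x : ℝ} (hx : x ≤ 0) :
    scadRho a lam1 x ≤ 0 := by
  rcases eq_or_lt_of_le hx with h | h
  · rw [h]; simp [scadRho]
  · unfold scadRho
    rw [Real.sign_of_neg h]
    have := scadPhi_nonneg ha hlam1 |x|
    nlinarith

lemma scadRho_nonneg (ha : 2 < a) (hlam1 : 0 < lam1) {x : ℝ} (hx : 0 ≤ x) :
    0 ≤ scadRho a lam1 x := by
  rcases eq_or_lt_of_le hx with h | h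
  · rw [← h]; simp [scadRho]
  · unfold scadRho
    rw [Real.sign_of_pos h]
    have := scadPhi_nonneg ha hlam1 |x|
    nlinarith

lemma scadRho_lip (ha : 2 < a) (hlam1 : 0 < lam1) (x y : ℝ) (hxy : x ≤ y) :
    scadRho a lam1 x - scadRho a lam1 y ≤ (y - x) / ((a - 1) * lam1) := by
  have hD : 0 < (a - 1) * lam1 := mul_pos (by linarith) hlam1
  rcases lt_or_ge 0 x with hx | hx
  · have hy : 0 < y := lt_of_lt_of_le hx hxy
    have h1 : scadRho a lam1 x = scadPhi a lam1 x := by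
      unfold scadRho; rw [Real.sign_of_pos hx, abs_of_pos hx, one_mul]
    have h2 : scadRho a lam1 y = scadPhi a lam1 y := by
      unfold scadRho; rw [Real.sign_of_pos hy, abs_of_pos hy, one_mul]
    rw [h1, h2]
    exact scadPhi_lip ha hlam1 x y hx.le hxy
  · rcases lt_or_ge y 0 with hy | hy
    · have hx' : x < 0 := lt_of_le_of_lt hxy hy
      have h1 : scadRho a lam1 x = -scadPhi a lam1 (-x) := by
        unfold scadRho; rw [Real.sign_of_neg hx', abs_of_neg hx']; ring
      have h2 : scadRho a lam1 y = -scadPhi a lam1 (-y) := by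
        unfold scadRho; rw [Real.sign_of_neg hy, abs_of_neg hy]; ring
      rw [h1, h2]
      have := scadPhi_lip ha hlam1 (-y) (-x) (by linarith) (by linarith)
      have heq : -x - -y = y - x := by ring
      rw [heq] at this
      linarith
    · have h1 := scadRho_nonpos ha hlam1 hx
      have h2 := scadRho_nonneg ha hlam1 hy
      have : (0:ℝ) ≤ (y - x) / ((a - 1) * lam1) := div_nonneg (by linarith) hD.le
      linarith

lemma strictMono_scadGam (ha : 2 < a) (hlam1 : 0 < lam1)
    (hlam2 : 1 / (2 * (a - 1)) < lam2) : StrictMono (scadGam a lam1 lam2) := by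
  intro x y hxy
  have hD : 0 < (a - 1) * lam1 := mul_pos (by linarith) hlam1
  have key := scadRho_lip ha hlam1 x y hxy.le
  have h1 : lam1 * scadRho a lam1 x - lam1 * scadRho a lam1 y ≤ (y - x) / (a - 1) := by
    have := mul_le_mul_of_nonneg_left key hlam1.le
    have ha1 : (a:ℝ) - 1 ≠ 0 := by linarith
    have heq : lam1 * ((y - x) / ((a - 1) * lam1)) = (y - x) / (a - 1) := by
      field_simp
    nlinarith
  have h2 : (y - x) / (a - 1) < 2 * lam2 * (y - x) := by
    rw [div_lt_iff₀ (by linarith : (0:ℝ) < a - 1)]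
    rw [div_lt_iff₀ (by linarith : (0:ℝ) < 2 * (a - 1))] at hlam2
    nlinarith
  unfold scadGam
  linarith

lemma scadGam_intInt (ha : 2 < a) (hlam1 : 0 < lam1)
    (hlam2 : 1 / (2 * (a - 1)) < lam2) (u v : ℝ) :
    IntervalIntegrable (scadGam a lam1 lam2) volume u v :=
  (strictMono_scadGam ha hlam1 hlam2).monotone.intervalIntegrable

lemma scadRho_intInt (ha : 2 < a) (hlam1 : 0 < lam1) (u v : ℝ) :
    IntervalIntegrable (scadRho a lam1) volume u v := by
  have hone : 1 / (2 * (a - 1)) < (1:ℝ) := by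
    rw [div_lt_one (by linarith : (0:ℝ) < 2 * (a - 1))]
    linarith
  have h1 : IntervalIntegrable (scadGam a lam1 1) volume u v :=
    scadGam_intInt ha hlam1 hone u v
  have h2 : IntervalIntegrable (fun t : ℝ => 2 * 1 * t) volume u v :=
    (continuous_const.mul continuous_id).intervalIntegrable u v
  have h3 := (h1.sub h2).const_mul lam1⁻¹
  have heq : (fun t => lam1⁻¹ * (scadGam a lam1 1 t - 2 * 1 * t)) = scadRho a lam1 := by
    funext t
    unfold scadGam
    field_simp
    ring
  rwa [heq] at h3

lemma ae_ne_zero : ∀ᵐ x : ℝ, x ≠ 0 := by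
  rw [MeasureTheory.ae_iff]
  simpa using MeasureTheory.measure_singleton (0:ℝ)

lemma integral_scadRho (ha : 2 < a) (hlam1 : 0 < lam1) (u : ℝ) :
    ∫ t in (0:ℝ)..u, scadRho a lam1 t = fSCAD a lam1 |u| := by
  rcases le_or_gt 0 u with hu | hu
  · rw [abs_of_nonneg hu, fSCAD_eq]
    apply intervalIntegral.integral_congr_ae
    filter_upwards with x hx
    rw [Set.uIoc_of_le hu] at hx
    unfold scadRho
    rw [Real.sign_of_pos hx.1, abs_of_pos hx.1, one_mul]
  · rw [abs_of_neg hu, fSCAD_eq]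
    have step1 : ∫ t in (0:ℝ)..u, scadRho a lam1 t
        = ∫ t in (0:ℝ)..u, -scadPhi a lam1 (-t) := by
      apply intervalIntegral.integral_congr_ae
      filter_upwards [ae_ne_zero] with x hx0 hx
      rw [Set.uIoc_comm, Set.uIoc_of_le hu.le] at hx
      have hxneg : x < 0 := lt_of_le_of_ne hx.2 hx0
      unfold scadRho
      rw [Real.sign_of_neg hxneg, abs_of_neg hxneg]
      ring
    rw [step1, intervalIntegral.integral_neg, intervalIntegral.integral_comp_neg (scadPhi a lam1),
      neg_zero, intervalIntegral.integral_symm, neg_neg]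

lemma g_eq_integral (ha : 2 < a) (hlam1 : 0 < lam1)
    (hlam2 : 1 / (2 * (a - 1)) < lam2) (u : ℝ) :
    lam1 * fSCAD a lam1 |u| + lam2 * u ^ 2
      = ∫ t in (0:ℝ)..u, scadGam a lam1 lam2 t := by
  have hrho := scadRho_intInt ha hlam1 0 u
  have hlin : IntervalIntegrable (fun t : ℝ => 2 * lam2 * t) volume 0 u :=
    (continuous_const.mul continuous_id).intervalIntegrable 0 u
  have h1 : ∫ t in (0:ℝ)..u, scadGam a lam1 lam2 t
      = (∫ t in (0:ℝ)..u, lam1 * scadRho a lam1 t)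
        + ∫ t in (0:ℝ)..u, 2 * lam2 * t := by
    rw [← intervalIntegral.integral_add (hrho.const_mul lam1) hlin]
    rfl
  rw [h1, intervalIntegral.integral_const_mul, integral_scadRho ha hlam1]
  have h2 : ∫ t in (0:ℝ)..u, 2 * lam2 * t = lam2 * u ^ 2 := by
    rw [intervalIntegral.integral_const_mul, integral_id]
    ring
  rw [h2]

lemma integral_lt_of_strictMono (ha : 2 < a) (hlam1 : 0 < lam1)
    (hlam2 : 1 / (2 * (a - 1)) < lam2) (u v : ℝ) (huv : u < v) :
    (∫ t in u..v, scadGam a lam1 lam2 t) < scadGam a lam1 lam2 v * (v - u)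
    ∧ scadGam a lam1 lam2 u * (v - u) < ∫ t in u..v, scadGam a lam1 lam2 t := by
  set G := scadGam a lam1 lam2 with hG
  have hsm := strictMono_scadGam ha hlam1 hlam2
  have hint : ∀ x y : ℝ, IntervalIntegrable G volume x y :=
    scadGam_intInt ha hlam1 hlam2
  set m := (u + v) / 2 with hm
  have hum : u < m := by rw [hm]; linarith
  have hmv : m < v := by rw [hm]; linarith
  have hsplit : (∫ t in u..m, G t) + ∫ t in m..v, G t = ∫ t in u..v, G t :=
    intervalIntegral.integral_add_adjacent_intervals (hint u m) (hint m v)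
  constructor
  · have b1 : (∫ t in u..m, G t) ≤ (m - u) * G m := by
      have := intervalIntegral.integral_mono_on hum.le (hint u m)
        (intervalIntegrable_const) (fun x hx => (hsm.monotone hx.2 : G x ≤ G m))
      simpa [smul_eq_mul] using this
    have b2 : (∫ t in m..v, G t) ≤ (v - m) * G v := by
      have := intervalIntegral.integral_mono_on hmv.le (hint m v)
        (intervalIntegrable_const) (fun x hx => (hsm.monotone hx.2 : G x ≤ G v))
      simpa [smul_eq_mul] using this
    have hlt : G m < G v := hsm hmv
    nlinarith
  · have b1 : (m - u) * G u ≤ ∫ t in u..m, G t := by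
      have := intervalIntegral.integral_mono_on hum.le
        (intervalIntegrable_const) (hint u m) (fun x hx => (hsm.monotone hx.1 : G u ≤ G x))
      simpa [smul_eq_mul] using this
    have b2 : (v - m) * G m ≤ ∫ t in m..v, G t := by
      have := intervalIntegral.integral_mono_on hmv.le
        (intervalIntegrable_const) (hint m v) (fun x hx => (hsm.monotone hx.1 : G m ≤ G x))
      simpa [smul_eq_mul] using this
    have hlt : G u < G m := hsm hum
    nlinarith

lemma oneDim_strictConvex (ha : 2 < a) (hlam1 : 0 < lam1)
    (hlam2 : 1 / (2 * (a - 1)) < lam2) (u v : ℝ) (huv : u < v)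
    (t : ℝ) (ht0 : 0 < t) (ht1 : t < 1) :
    lam1 * fSCAD a lam1 |t * u + (1 - t) * v| + lam2 * (t * u + (1 - t) * v) ^ 2
      < t * (lam1 * fSCAD a lam1 |u| + lam2 * u ^ 2)
        + (1 - t) * (lam1 * fSCAD a lam1 |v| + lam2 * v ^ 2) := by
  set G := scadGam a lam1 lam2 with hG
  have hint : ∀ x y : ℝ, IntervalIntegrable G volume x y :=
    scadGam_intInt ha hlam1 hlam2
  set z := t * u + (1 - t) * v with hz
  have huz : u < z := by rw [hz]; nlinarith
  have hzv : z < v := by rw [hz]; nlinarith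
  rw [g_eq_integral ha hlam1 hlam2, g_eq_integral ha hlam1 hlam2,
    g_eq_integral ha hlam1 hlam2]
  have A : (∫ s in u..z, G s) < G z * (z - u) :=
    (integral_lt_of_strictMono ha hlam1 hlam2 u z huz).1
  have B : G z * (v - z) < ∫ s in z..v, G s :=
    (integral_lt_of_strictMono ha hlam1 hlam2 z v hzv).2
  have e1 : (∫ s in (0:ℝ)..u, G s) + ∫ s in u..z, G s = ∫ s in (0:ℝ)..z, G s :=
    intervalIntegral.integral_add_adjacent_intervals (hint 0 u) (hint u z)
  have e2 : (∫ s in (0:ℝ)..z, G s) + ∫ s in z..v, G s = ∫ s in (0:ℝ)..v, G s :=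
    intervalIntegral.integral_add_adjacent_intervals (hint 0 z) (hint z v)
  have C1 : (∫ s in (0:ℝ)..z, G s) < (∫ s in (0:ℝ)..u, G s) + G z * (z - u) := by
    linarith
  have C2 : (∫ s in (0:ℝ)..z, G s) < (∫ s in (0:ℝ)..v, G s) - G z * (v - z) := by
    linarith
  have hzero : t * (z - u) - (1 - t) * (v - z) = 0 := by rw [hz]; ring
  calc (∫ s in (0:ℝ)..z, G s)
      = t * (∫ s in (0:ℝ)..z, G s) + (1 - t) * (∫ s in (0:ℝ)..z, G s) := by ring
    _ < t * ((∫ s in (0:ℝ)..u, G s) + G z * (z - u))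
        + (1 - t) * ((∫ s in (0:ℝ)..v, G s) - G z * (v - z)) :=
        add_lt_add (mul_lt_mul_of_pos_left C1 ht0)
          (mul_lt_mul_of_pos_left C2 (by linarith))
    _ = t * (∫ s in (0:ℝ)..u, G s) + (1 - t) * (∫ s in (0:ℝ)..v, G s)
        + G z * (t * (z - u) - (1 - t) * (v - z)) := by ring
    _ = t * (∫ s in (0:ℝ)..u, G s) + (1 - t) * (∫ s in (0:ℝ)..v, G s) := by
        rw [hzero, mul_zero, add_zero]

end aux

/-- Strict convexity of the coordinatewise SCAD_L2 penalty on ℝ^p. -/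
theorem scad_l2_coordinatewise_strictly_convex
    (a lam1 lam2 : ℝ) (ha : 2 < a) (hlam1 : 0 < lam1)
    (hlam2 : 1 / (2 * (a - 1)) < lam2)
    (p : ℕ) (hp : 1 ≤ p) :
    ∀ x y : Fin p → ℝ, x ≠ y → ∀ t : ℝ, 0 < t → t < 1 →
      (∑ j, (lam1 * fSCAD a lam1 |(t • x + (1 - t) • y) j|
          + lam2 * ((t • x + (1 - t) • y) j) ^ 2))
        < t * (∑ j, (lam1 * fSCAD a lam1 |x j| + lam2 * (x j) ^ 2))
          + (1 - t) * (∑ j, (lam1 * fSCAD a lam1 |y j| + lam2 * (y j) ^ 2)) := by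
  intro x y hxy t ht0 ht1
  simp only [Pi.add_apply, Pi.smul_apply, smul_eq_mul]
  rw [Finset.mul_sum, Finset.mul_sum, ← Finset.sum_add_distrib]
  obtain ⟨j0, hj0⟩ := Function.ne_iff.mp hxy
  have key : ∀ j : Fin p, x j ≠ y j →
      lam1 * fSCAD a lam1 |t * x j + (1 - t) * y j| + lam2 * (t * x j + (1 - t) * y j) ^ 2
        < t * (lam1 * fSCAD a lam1 |x j| + lam2 * (x j) ^ 2)
          + (1 - t) * (lam1 * fSCAD a lam1 |y j| + lam2 * (y j) ^ 2) := by
    intro j hne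
    rcases lt_or_gt_of_ne hne with h | h
    · exact oneDim_strictConvex ha hlam1 hlam2 (x j) (y j) h t ht0 ht1
    · have := oneDim_strictConvex ha hlam1 hlam2 (y j) (x j) h (1 - t)
        (by linarith) (by linarith)
      have harg : (1 - t) * y j + (1 - (1 - t)) * x j = t * x j + (1 - t) * y j := by ring
      rw [harg] at this
      have h2 : (1:ℝ) - (1 - t) = t := by ring
      rw [h2] at this
      linarith
  apply Finset.sum_lt_sum
  · intro j _
    rcases eq_or_ne (x j) (y j) with h | h
    · have harg : t * x j + (1 - t) * y j = x j := by rw [h]; ring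
      rw [harg, h]
      have : t * (lam1 * fSCAD a lam1 |y j| + lam2 * (y j) ^ 2)
          + (1 - t) * (lam1 * fSCAD a lam1 |y j| + lam2 * (y j) ^ 2)
          = lam1 * fSCAD a lam1 |y j| + lam2 * (y j) ^ 2 := by ring
      rw [this]
    · exact (key j h).le
  · exact ⟨j0, Finset.mem_univ _, key j0 hj0⟩
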